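/- In the Min-Set-Cover reduction to Two-Stage Selection: given universe U of size m' and collection A = {A_1,…,A_m} of subsets of U covering U, construct items e_A (A ∈ A) with first-stage cost 1, items u_1,…,u_m with first-stage cost M = |U|·|A|, and for each i ∈ U a scenario S_i under which c^{S_i}_{e_A} = M if i ∈ A and 0 otherwise, and exactly r_i of the u-items have cost 0 (the rest M), where r_i = |{A ∈ A : i ∈ A}|; set p = m + 1. Then for every k, there exists a cover D ⊆ A with |D| ≤ k if and only if there exists a first-stage solution X with max_{i∈U} f₁(X, S_i) ≤ k. -/

import Mathlib

open Finset

/-- Second-stage completion cost. -/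
noncomputable def complMin {ι : Type*} [Fintype ι] [DecidableEq ι]
    (c : ι → ℝ) (X : Finset ι) (p : ℕ) : ℝ :=
  sInf {v : ℝ | ∃ Y ⊆ Finset.univ \ X, Y.card = p - X.card ∧ v = ∑ e ∈ Y, c e}

/-- The two-stage cost `f₁(X,S)`. -/
noncomputable def f1 {ι : Type*} [Fintype ι] [DecidableEq ι]
    (C c : ι → ℝ) (X : Finset ι) (p : ℕ) : ℝ :=
  ∑ e ∈ X, C e + complMin c X p

lemma complMin_nonneg {ι : Type*} [Fintype ι] [DecidableEq ι]
    (c : ι → ℝ) (X : Finset ι) (p : ℕ) (hc : ∀ e, 0 ≤ c e) :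
    0 ≤ complMin c X p := by
  apply Real.sInf_nonneg
  rintro v ⟨Y, -, -, rfl⟩
  exact Finset.sum_nonneg fun e _ => hc e

lemma complMin_le {ι : Type*} [Fintype ι] [DecidableEq ι]
    (c : ι → ℝ) (X : Finset ι) (p : ℕ) (hc : ∀ e, 0 ≤ c e)
    (Y : Finset ι) (hY : Y ⊆ Finset.univ \ X) (hcard : Y.card = p - X.card) :
    complMin c X p ≤ ∑ e ∈ Y, c e := by
  apply csInf_le
  · refine ⟨0, ?_⟩
    rintro v ⟨Y', -, -, rfl⟩
    exact Finset.sum_nonneg fun e _ => hc e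
  · exact ⟨Y, hY, hcard, rfl⟩

lemma le_complMin {ι : Type*} [Fintype ι] [DecidableEq ι]
    (c : ι → ℝ) (X : Finset ι) (p : ℕ) (b : ℝ)
    (hcard : p - X.card ≤ (Finset.univ \ X).card)
    (hb : ∀ Y ⊆ Finset.univ \ X, Y.card = p - X.card → b ≤ ∑ e ∈ Y, c e) :
    b ≤ complMin c X p := by
  apply le_csInf
  · obtain ⟨Y, hY, hYcard⟩ := Finset.exists_subset_card_eq hcard
    exact ⟨∑ e ∈ Y, c e, Y, hY, hYcard, rfl⟩
  · rintro v ⟨Y, h1, h2, rfl⟩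
    exact hb Y h1 h2

lemma card_filter_lt_fin (m r : ℕ) (h : r ≤ m) :
    ((Finset.univ : Finset (Fin m)).filter fun j : Fin m => (j : ℕ) < r).card = r := by
  have heq : ((Finset.univ : Finset (Fin m)).filter fun j : Fin m => (j : ℕ) < r)
      = (Finset.range r).attachFin
        (fun x hx => lt_of_lt_of_le (Finset.mem_range.mp hx) h) := by
    ext j
    simp [Finset.mem_attachFin]
  rw [heq, Finset.card_attachFin, Finset.card_range]

theorem set_cover_two_stage_reduction (U : Type*) [Fintype U] [DecidableEq U]
    [Nonempty U] (m : ℕ) (hm : 1 ≤ m) (A : Fin m → Finset U)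
    (hcover : ∀ i : U, ∃ j, i ∈ A j)
    (M : ℝ) (hM : M = (Fintype.card U) * m)
    (C : (Fin m ⊕ Fin m) → ℝ) (hC : C = Sum.elim (fun _ => 1) (fun _ => M))
    (c : U → (Fin m ⊕ Fin m) → ℝ)
    (hc : c = fun i => Sum.elim (fun j => if i ∈ A j then M else 0)
      (fun j : Fin m => if (j : ℕ) < (Finset.univ.filter (fun j' => i ∈ A j')).card
        then 0 else M))
    (k : ℕ) :
    (∃ D : Finset (Fin m), (∀ i : U, ∃ j ∈ D, i ∈ A j) ∧ D.card ≤ k) ↔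
      (∃ X : Finset (Fin m ⊕ Fin m), X.card ≤ m + 1 ∧
        ∀ i : U, f1 C (c i) X (m + 1) ≤ (k : ℝ)) := by
  -- Basic facts about M
  have hU1 : 1 ≤ Fintype.card U := Fintype.card_pos
  have hmM : (m : ℝ) ≤ M := by
    rw [hM]
    have : (1 : ℝ) ≤ (Fintype.card U : ℝ) := by exact_mod_cast hU1
    nlinarith [Nat.cast_nonneg (α := ℝ) m]
  have hM1 : (1 : ℝ) ≤ M := le_trans (by exact_mod_cast hm) hmM
  have hM0 : (0 : ℝ) ≤ M := le_trans zero_le_one hM1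
  have hMne : M ≠ 0 := by linarith
  have hcnn : ∀ i e, 0 ≤ c i e := by
    intro i e
    subst hc
    rcases e with j | j <;> simp only [Sum.elim_inl, Sum.elim_inr] <;>
      split <;> simp [hM0]
  have hCnn : ∀ e, 0 ≤ C e := by
    intro e
    subst hC
    rcases e with j | j <;> simp [hM0]
  constructor
  · -- Forward direction
    rintro ⟨D, hDcov, hDk⟩
    refine ⟨D.image Sum.inl, ?_, ?_⟩
    · have := Finset.card_image_le (f := (Sum.inl : Fin m → Fin m ⊕ Fin m)) (s := D)
      have hDm : D.card ≤ m := by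
        simpa using Finset.card_le_card (Finset.subset_univ D)
      omega
    · intro i
      set X : Finset (Fin m ⊕ Fin m) := D.image Sum.inl with hX
      have hXcard : X.card = D.card :=
        Finset.card_image_of_injective _ Sum.inl_injective
      set T : Finset (Fin m) := Finset.univ.filter (fun j => i ∈ A j) with hT
      set r : ℕ := T.card with hr
      have hrm : r ≤ m := by
        simpa using Finset.card_le_card (Finset.subset_univ T)
      -- one element of D in T
      obtain ⟨j0, hj0D, hj0A⟩ := hDcov i
      have hDT : 1 ≤ (D ∩ T).card := by
        rw [Finset.one_le_card]
        exact ⟨j0, Finset.mem_inter.2 ⟨hj0D, by simp [hT, hj0A]⟩⟩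
      have hunion : (D ∪ T).card + 1 ≤ D.card + r := by
        have := Finset.card_union_add_card_inter D T
        omega
      have hunm : (D ∪ T).card ≤ m := by
        simpa using Finset.card_le_card (Finset.subset_univ (D ∪ T))
      -- zero-cost items outside X
      set Z1 : Finset (Fin m ⊕ Fin m) :=
        (Finset.univ \ (D ∪ T)).image Sum.inl with hZ1
      set Z2 : Finset (Fin m ⊕ Fin m) :=
        (Finset.univ.filter fun j : Fin m => (j : ℕ) < r).image Sum.inr with hZ2
      have hZ1card : Z1.card = m - (D ∪ T).card := by
        rw [hZ1, Finset.card_image_of_injective _ Sum.inl_injective,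
          Finset.card_sdiff_of_subset (Finset.subset_univ _)]
        simp
      have hZ2card : Z2.card = r := by
        rw [hZ2, Finset.card_image_of_injective _ Sum.inr_injective,
          card_filter_lt_fin m r hrm]
      have hdisj : Disjoint Z1 Z2 := by
        rw [Finset.disjoint_left]
        rintro e he1 he2
        rw [hZ1, Finset.mem_image] at he1
        rw [hZ2, Finset.mem_image] at he2
        obtain ⟨a, -, rfl⟩ := he1
        obtain ⟨b, -, hb⟩ := he2
        exact nomatch hb
      set Z := Z1 ∪ Z2 with hZ
      have hZcard : Z.card = (m - (D ∪ T).card) + r := by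
        rw [hZ, Finset.card_union_of_disjoint hdisj, hZ1card, hZ2card]
      have hZsub : Z ⊆ Finset.univ \ X := by
        intro e he
        rw [Finset.mem_sdiff]
        refine ⟨Finset.mem_univ _, ?_⟩
        rw [hZ, Finset.mem_union] at he
        rcases he with he | he
        · rw [hZ1, Finset.mem_image] at he
          obtain ⟨a, ha, rfl⟩ := he
          rw [Finset.mem_sdiff] at ha
          intro hmem
          rw [hX, Finset.mem_image] at hmem
          obtain ⟨b, hb, hba⟩ := hmem
          have : b = a := Sum.inl_injective hba
          exact ha.2 (Finset.mem_union_left _ (this ▸ hb))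
        · rw [hZ2, Finset.mem_image] at he
          obtain ⟨a, -, rfl⟩ := he
          intro hmem
          rw [hX, Finset.mem_image] at hmem
          obtain ⟨b, -, hba⟩ := hmem
          exact nomatch hba
      have hZzero : ∀ e ∈ Z, c i e = 0 := by
        intro e he
        rw [hZ, Finset.mem_union] at he
        rcases he with he | he
        · rw [hZ1, Finset.mem_image] at he
          obtain ⟨a, ha, rfl⟩ := he
          rw [Finset.mem_sdiff] at ha
          have hna : i ∉ A a := by
            intro hcon
            exact ha.2 (Finset.mem_union_right _ (by simp [hT, hcon]))
          simp [hc, hna]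
        · rw [hZ2, Finset.mem_image] at he
          obtain ⟨a, ha, rfl⟩ := he
          rw [Finset.mem_filter] at ha
          have : (a : ℕ) < r := ha.2
          simp only [hc, Sum.elim_inr]
          rw [if_pos (by simpa [hr, hT] using this)]
      -- choose Y of the right size inside Z
      have hsize : m + 1 - X.card ≤ Z.card := by
        rw [hZcard, hXcard]
        have hDu : D.card ≤ (D ∪ T).card :=
          Finset.card_le_card Finset.subset_union_left
        omega
      obtain ⟨Y, hYZ, hYcard⟩ := Finset.exists_subset_card_eq hsize
      have hsumY : ∑ e ∈ Y, c i e = 0 :=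
        Finset.sum_eq_zero fun e he => hZzero e (hYZ he)
      have hcm_le : complMin (c i) X (m + 1) ≤ 0 := by
        have := complMin_le (c i) X (m + 1) (hcnn i) Y
          (hYZ.trans hZsub) hYcard
        linarith [this, hsumY.le, hsumY.ge]
      have hcm_ge : 0 ≤ complMin (c i) X (m + 1) :=
        complMin_nonneg _ _ _ (hcnn i)
      have hsumX : ∑ e ∈ X, C e = D.card := by
        rw [hX, Finset.sum_image (fun a _ b _ h => Sum.inl_injective h)]
        simp [hC]
      rw [f1, hsumX]
      have : (D.card : ℝ) ≤ k := by exact_mod_cast hDk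
      linarith
  · -- Backward direction
    rintro ⟨X, hXm, hf⟩
    by_cases hkm : m ≤ k
    · refine ⟨Finset.univ, ?_, by simpa using hkm⟩
      intro i
      obtain ⟨j, hj⟩ := hcover i
      exact ⟨j, Finset.mem_univ j, hj⟩
    · push_neg at hkm
      have hkM : (k : ℝ) < M := lt_of_lt_of_le (by exact_mod_cast hkm) hmM
      -- from any scenario: first-stage cost ≤ k
      have i0 : U := Classical.arbitrary U
      have h1 : ∑ e ∈ X, C e ≤ (k : ℝ) := by
        have := hf i0
        rw [f1] at this
        have := complMin_nonneg (c i0) X (m + 1) (hcnn i0)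
        linarith [hf i0, this]
      have h1' : ∑ e ∈ X, C e ≤ (k : ℝ) := h1
      -- no inr-items in X
      have hnoinr : ∀ j : Fin m, Sum.inr j ∉ X := by
        intro j hj
        have : C (Sum.inr j) ≤ ∑ e ∈ X, C e :=
          Finset.single_le_sum (fun e _ => hCnn e) hj
        have hCe : C (Sum.inr j) = M := by rw [hC]; rfl
        rw [hCe] at this
        linarith
      set D : Finset (Fin m) := Finset.univ.filter (fun j => Sum.inl j ∈ X) with hD
      have hXD : X = D.image Sum.inl := by
        ext e
        rcases e with j | j
        · simp [hD]
        · simp only [Finset.mem_image]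
          constructor
          · intro h; exact absurd h (hnoinr j)
          · rintro ⟨b, -, hb⟩; exact nomatch hb
      have hDXcard : D.card = X.card := by
        rw [hXD, Finset.card_image_of_injective _ Sum.inl_injective]
      have hsumX : ∑ e ∈ X, C e = D.card := by
        rw [hXD, Finset.sum_image (fun a _ b _ h => Sum.inl_injective h)]
        simp [hC]
      have hDk : D.card ≤ k := by
        rw [hsumX] at h1
        exact_mod_cast h1
      refine ⟨D, ?_, hDk⟩
      intro i
      by_contra hnc
      push_neg at hnc
      -- scenario i forces large cost
      set T : Finset (Fin m) := Finset.univ.filter (fun j => i ∈ A j) with hT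
      set r : ℕ := T.card with hr
      have hrm : r ≤ m := by
        simpa using Finset.card_le_card (Finset.subset_univ T)
      have hDTdisj : Disjoint D T := by
        rw [Finset.disjoint_left]
        intro j hjD hjT
        rw [hT, Finset.mem_filter] at hjT
        exact hnc j hjD hjT.2
      have hDTcard : (D ∪ T).card = D.card + r :=
        Finset.card_union_of_disjoint hDTdisj
      have hDTm : D.card + r ≤ m := by
        rw [← hDTcard]
        simpa using Finset.card_le_card (Finset.subset_univ (D ∪ T))
      have hDm : D.card < m := lt_of_le_of_lt hDk hkm
      -- lower bound for complMin
      have hlow : M ≤ complMin (c i) X (m + 1) := by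
        apply le_complMin
        · rw [Finset.card_sdiff_of_subset (Finset.subset_univ X)]
          have : (Finset.univ : Finset (Fin m ⊕ Fin m)).card = m + m := by
            simp
          rw [this]
          have hXm' : X.card ≤ m + 1 := hXm
          omega
        · intro Y hYsub hYcard
          -- Y must contain an item of cost M
          by_cases hex : ∃ e ∈ Y, c i e = M
          · obtain ⟨e, heY, hce⟩ := hex
            calc M = c i e := hce.symm
              _ ≤ ∑ e ∈ Y, c i e :=
                Finset.single_le_sum (fun e _ => hcnn i e) heY
          · push_neg at hex
            exfalso
            -- then Y consists of zero-cost items, but there are too few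
            set Z1 : Finset (Fin m ⊕ Fin m) :=
              (Finset.univ \ (D ∪ T)).image Sum.inl with hZ1
            set Z2 : Finset (Fin m ⊕ Fin m) :=
              (Finset.univ.filter fun j : Fin m => (j : ℕ) < r).image Sum.inr
              with hZ2
            have hYZ : Y ⊆ Z1 ∪ Z2 := by
              intro e heY
              have heX : e ∉ X := (Finset.mem_sdiff.mp (hYsub heY)).2
              have hne : c i e ≠ M := hex e heY
              rcases e with j | j
              · have hnj : i ∉ A j := by
                  intro hj
                  apply hne
                  simp [hc, hj]
                have hjD : j ∉ D := by
                  intro hjD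
                  exact heX (hXD ▸ Finset.mem_image_of_mem _ hjD)
                apply Finset.mem_union_left
                rw [hZ1, Finset.mem_image]
                refine ⟨j, ?_, rfl⟩
                rw [Finset.mem_sdiff]
                refine ⟨Finset.mem_univ _, ?_⟩
                rw [Finset.mem_union]
                rintro (h | h)
                · exact hjD h
                · rw [hT, Finset.mem_filter] at h
                  exact hnj h.2
              · have hjr : (j : ℕ) < r := by
                  by_contra hjr
                  apply hne
                  simp only [hc, Sum.elim_inr]
                  rw [if_neg (by simpa [hr, hT] using hjr)]
                apply Finset.mem_union_right
                rw [hZ2, Finset.mem_image]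
                exact ⟨j, Finset.mem_filter.2 ⟨Finset.mem_univ _, hjr⟩, rfl⟩
            have hZ1card : Z1.card = m - (D.card + r) := by
              rw [hZ1, Finset.card_image_of_injective _ Sum.inl_injective,
                Finset.card_sdiff_of_subset (Finset.subset_univ _), hDTcard]
              simp
            have hZ2card : Z2.card = r := by
              rw [hZ2, Finset.card_image_of_injective _ Sum.inr_injective,
                card_filter_lt_fin m r hrm]
            have hdisj : Disjoint Z1 Z2 := by
              rw [Finset.disjoint_left]
              rintro e he1 he2
              rw [hZ1, Finset.mem_image] at he1
              rw [hZ2, Finset.mem_image] at he2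
              obtain ⟨a, -, rfl⟩ := he1
              obtain ⟨b, -, hb⟩ := he2
              exact nomatch hb
            have hZcard : (Z1 ∪ Z2).card = m - (D.card + r) + r := by
              rw [Finset.card_union_of_disjoint hdisj, hZ1card, hZ2card]
            have hYle : Y.card ≤ m - (D.card + r) + r :=
              hZcard ▸ Finset.card_le_card hYZ
            rw [hYcard, ← hDXcard] at hYle
            omega
      -- contradiction with the cost bound
      have := hf i
      rw [f1] at this
      have hXnn : 0 ≤ ∑ e ∈ X, C e := Finset.sum_nonneg fun e _ => hCnn e
      linarith
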